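/- arXiv:2404.19190 — 2 statements merged into one kernel-verified Lean document; each statement's English description precedes it below -/
import Mathlib

section
/- Let q be an odd prime power, h ∈ GF(q), h ≠ 0, 1, and consider in PG(2,q) the conics 𝒞 : X₀X₂ = X₁² and 𝒞_h : X₀X₂ = hX₁². For μ ∈ GF(q)*, the point P_μ = (hμ² : μ : 1) of 𝒞_h is an internal point of 𝒞 if and only if 1 - h is a non-square in GF(q). -/
open Projectivization

/-- Membership of `mk F v` in the conic set is expressible via the vector `v`. -/
lemma aux_memC_iff {F : Type*} [Field F]
    (C : Set (Projectivization F (Fin 3 → F)))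
    (hC : C = {p : Projectivization F (Fin 3 → F) | p.rep 0 * p.rep 2 = p.rep 1 ^ 2})
    (v : Fin 3 → F) (hv : v ≠ 0) :
    Projectivization.mk F v hv ∈ C ↔ v 0 * v 2 = v 1 ^ 2 := by
  subst hC
  have h1 : Projectivization.mk F (Projectivization.mk F v hv).rep
      (Projectivization.rep_nonzero _) = Projectivization.mk F v hv :=
    Projectivization.mk_rep _
  rw [Projectivization.mk_eq_mk_iff] at h1
  obtain ⟨a, ha⟩ := h1
  have h0 : (Projectivization.mk F v hv).rep 0 = (a : F) * v 0 := by
    rw [← ha]; simp [Units.smul_def]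
  have h1' : (Projectivization.mk F v hv).rep 1 = (a : F) * v 1 := by
    rw [← ha]; simp [Units.smul_def]
  have h2 : (Projectivization.mk F v hv).rep 2 = (a : F) * v 2 := by
    rw [← ha]; simp [Units.smul_def]
  simp only [Set.mem_setOf_eq, h0, h1', h2]
  have ha2 : ((a : F))^2 ≠ 0 := pow_ne_zero 2 a.ne_zero
  constructor
  · intro hEq
    apply mul_left_cancel₀ ha2
    calc ((a : F))^2 * (v 0 * v 2) = ((a : F) * v 0) * ((a : F) * v 2) := by ring
      _ = ((a : F) * v 1) ^ 2 := hEq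
      _ = ((a : F))^2 * v 1 ^ 2 := by ring
  · intro hEq
    calc ((a : F) * v 0) * ((a : F) * v 2) = ((a : F))^2 * (v 0 * v 2) := by ring
      _ = ((a : F))^2 * v 1 ^ 2 := by rw [hEq]
      _ = ((a : F) * v 1) ^ 2 := by ring

lemma aux_sub_le_iff {F : Type*} [Field F] (v : Fin 3 → F) (hv : v ≠ 0)
    (W : Submodule F (Fin 3 → F)) :
    (Projectivization.mk F v hv).submodule ≤ W ↔ v ∈ W := by
  rw [Projectivization.submodule_mk, Submodule.span_singleton_le_iff_mem]

lemma aux_sub_le_iff' {F : Type*} [Field F] (p : Projectivization F (Fin 3 → F))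
    (W : Submodule F (Fin 3 → F)) :
    p.submodule ≤ W ↔ p.rep ∈ W := by
  rw [Projectivization.submodule_eq, Submodule.span_singleton_le_iff_mem]

/-- For `q` odd, `h ∈ GF(q)*`, `h ≠ 1` and `μ ∈ GF(q)*`, the point `P_μ = (hμ² : μ : 1)`
of the conic `𝒞_h : X₀X₂ = hX₁²` is internal to the conic `𝒞 : X₀X₂ = X₁²` iff `1 - h` is
a non-square in `GF(q)`. -/
theorem stmt11 (q : ℕ) (hodd : Odd q)
    (F : Type*) [Field F] [Fintype F] (hcard : Fintype.card F = q)
    (C : Set (Projectivization F (Fin 3 → F)))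
    (hC : C = {p : Projectivization F (Fin 3 → F) | p.rep 0 * p.rep 2 = p.rep 1 ^ 2})
    (h μ : F) (hh0 : h ≠ 0) (hh1 : h ≠ 1) (hμ : μ ≠ 0)
    (P : Projectivization F (Fin 3 → F))
    (hPdef : P = Projectivization.mk F ![h * μ ^ 2, μ, 1]
      (by intro hv; simpa using congrFun hv 2)) :
    ((P ∉ C) ∧ ∀ W : Submodule F (Fin 3 → F), Module.finrank F W = 2 →
        {p | p ∈ C ∧ p.submodule ≤ W}.ncard = 1 → ¬ P.submodule ≤ W) ↔
      ¬ ∃ y : F, y ^ 2 = 1 - h := by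
  have hvP : (![h * μ ^ 2, μ, 1] : Fin 3 → F) ≠ 0 := by
    intro hv; simpa using congrFun hv 2
  constructor
  · -- internal → nonsquare
    rintro ⟨-, hW⟩ ⟨y, hy⟩
    -- take t₀ = (1+y)/(h*μ)
    set t₀ : F := (1 + y) / (h * μ) with ht₀
    have hQ : h * μ ^ 2 * t₀ ^ 2 - 2 * μ * t₀ + 1 = 0 := by
      rw [ht₀]; field_simp; linear_combination hy
    -- the tangent line as kernel of a functional
    let φ : (Fin 3 → F) →ₗ[F] F :=
      { toFun := fun x => t₀ ^ 2 * x 0 - 2 * t₀ * x 1 + x 2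
        map_add' := by intro a b; simp; ring
        map_smul' := by intro a b; simp; ring }
    have hφ : ∀ x : Fin 3 → F, φ x = t₀ ^ 2 * x 0 - 2 * t₀ * x 1 + x 2 := fun _ => rfl
    have hrange : LinearMap.range φ = ⊤ := by
      rw [LinearMap.range_eq_top]
      intro y
      exact ⟨![0, 0, y], by simp [hφ]⟩
    have hker : Module.finrank F (LinearMap.ker φ) = 2 := by
      have := LinearMap.finrank_range_add_finrank_ker φ
      rw [hrange, finrank_top, Module.finrank_self, Module.finrank_fin_fun] at this
      omega
    have huv : (![1, t₀, t₀ ^ 2] : Fin 3 → F) ≠ 0 := by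
      intro hv; simpa using congrFun hv 0
    have hcard1 : {p | p ∈ C ∧ p.submodule ≤ LinearMap.ker φ}.ncard = 1 := by
      rw [Set.ncard_eq_one]
      refine ⟨Projectivization.mk F ![1, t₀, t₀ ^ 2] huv, ?_⟩
      ext p
      simp only [Set.mem_setOf_eq, Set.mem_singleton_iff]
      constructor
      · rintro ⟨hpC, hpW⟩
        rw [aux_sub_le_iff'] at hpW
        rw [LinearMap.mem_ker, hφ] at hpW
        rw [hC, Set.mem_setOf_eq] at hpC
        set v := p.rep with hvdef
        have hv : v ≠ 0 := p.rep_nonzero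
        have hv0 : v 0 ≠ 0 := by
          intro h0
          have hv1 : v 1 = 0 := by
            have := hpC; rw [h0] at this; simp at this
            exact pow_eq_zero_iff (n := 2) (by norm_num) |>.mp this.symm
          have hv2 : v 2 = 0 := by rw [h0, hv1] at hpW; simpa using hpW
          apply hv; funext i; fin_cases i <;> simp [h0, hv1, hv2]
        have hs : v 1 = v 0 * t₀ := by
          -- (v1/v0 - t₀)^2 = 0
          have key : (v 1 - v 0 * t₀) ^ 2 = 0 := by
            linear_combination v 0 * hpW - hpC
          have := pow_eq_zero_iff (n := 2) (by norm_num) |>.mp key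
          linear_combination this
        have hv2 : v 2 = v 0 * t₀ ^ 2 := by
          have : v 0 * v 2 = v 0 * (v 0 * t₀ ^ 2) := by rw [hpC, hs]; ring
          exact mul_left_cancel₀ hv0 this
        rw [← Projectivization.mk_rep p]
        rw [Projectivization.mk_eq_mk_iff]
        refine ⟨Units.mk0 (v 0) hv0, ?_⟩
        funext i
        fin_cases i
        · simp [Units.smul_def, ← hvdef]
        · simp [Units.smul_def, ← hvdef, hs]
        · simp [Units.smul_def, ← hvdef, hv2]
      · rintro rfl
        constructor
        · rw [aux_memC_iff C hC]; simp
        · rw [aux_sub_le_iff]; rw [LinearMap.mem_ker, hφ]; simp; ring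
    have := hW (LinearMap.ker φ) hker hcard1
    apply this
    rw [hPdef, aux_sub_le_iff, LinearMap.mem_ker, hφ]
    simp only [Matrix.cons_val_zero, Matrix.cons_val_one, Matrix.head_cons]
    have h2 : (![h * μ ^ 2, μ, 1] : Fin 3 → F) 2 = 1 := by simp
    rw [h2]
    linear_combination hQ
  · -- nonsquare → internal
    intro hns
    have h1h : (1 : F) - h ≠ 0 := by
      intro h0; exact hh1 (by linear_combination -h0)
    constructor
    · rw [hPdef, aux_memC_iff C hC]
      simp only [Matrix.cons_val_zero, Matrix.cons_val_one, Matrix.head_cons]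
      intro hEq
      have h2 : (![h * μ ^ 2, μ, 1] : Fin 3 → F) 2 = 1 := by simp
      rw [h2, mul_one] at hEq
      apply hh1
      have hμ2 : μ ^ 2 ≠ 0 := pow_ne_zero 2 hμ
      have : h * μ ^ 2 = 1 * μ ^ 2 := by linear_combination hEq
      exact mul_right_cancel₀ hμ2 this
    · intro W hWrank hWcard hPW
      rw [hPdef, aux_sub_le_iff] at hPW
      obtain ⟨c, hcS⟩ := Set.ncard_eq_one.mp hWcard
      have hcmem : c ∈ C ∧ c.submodule ≤ W := by
        rw [Set.eq_singleton_iff_unique_mem] at hcS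
        exact hcS.1
      obtain ⟨hcC, hcW⟩ := hcmem
      set w := c.rep with hwdef
      have hw : w ≠ 0 := c.rep_nonzero
      have hwW : w ∈ W := (aux_sub_le_iff' c W).mp hcW
      have hwC : w 0 * w 2 = w 1 ^ 2 := by rw [hC, Set.mem_setOf_eq] at hcC; exact hcC
      have huniq : ∀ (v : Fin 3 → F) (hv : v ≠ 0), v ∈ W →
          v 0 * v 2 = v 1 ^ 2 → Projectivization.mk F v hv = c := by
        intro v hv hvW hvC
        rw [Set.eq_singleton_iff_unique_mem] at hcS
        exact hcS.2 _ ⟨(aux_memC_iff C hC v hv).mpr hvC, (aux_sub_le_iff v hv W).mpr hvW⟩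
      by_cases hw0 : w 0 = 0
      · -- c = (0,0,*), second point (hμ², μ, 1/h)
        have hw1 : w 1 = 0 := by
          have : w 1 ^ 2 = 0 := by rw [← hwC, hw0, zero_mul]
          exact pow_eq_zero_iff (n := 2) (by norm_num) |>.mp this
        have hw2 : w 2 ≠ 0 := by
          intro h2; apply hw; funext i; fin_cases i <;> simp [hw0, hw1, h2]
        set x : Fin 3 → F := ![h * μ ^ 2, μ, 1] + ((1/h - 1)/(w 2)) • w with hxdef
        have hx0 : x 0 = h * μ ^ 2 := by
          rw [hxdef]
          simp only [Pi.add_apply, Pi.smul_apply, smul_eq_mul, hw0, mul_zero, add_zero]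
          simp
        have hx1 : x 1 = μ := by
          rw [hxdef]
          simp only [Pi.add_apply, Pi.smul_apply, smul_eq_mul, hw1, mul_zero, add_zero]
          simp
        have hx2 : x 2 = 1/h := by
          rw [hxdef]
          simp only [Pi.add_apply, Pi.smul_apply, smul_eq_mul]
          have h2' : (![h * μ ^ 2, μ, 1] : Fin 3 → F) 2 = 1 := by simp
          rw [h2']
          field_simp
          ring
        have hxne : x ≠ 0 := by
          intro h0
          have := congrFun h0 0
          rw [hx0] at this
          simp at this
          rcases this with h' | h'
          · exact hh0 h'
          · exact hμ h'
        have hxW : x ∈ W := W.add_mem hPW (W.smul_mem _ hwW)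
        have hxC : x 0 * x 2 = x 1 ^ 2 := by rw [hx0, hx1, hx2]; field_simp
        have heq := huniq x hxne hxW hxC
        rw [← Projectivization.mk_rep c, Projectivization.mk_eq_mk_iff'] at heq
        obtain ⟨b, hb⟩ := heq
        have hb0 : b * w 0 = x 0 := congrFun hb 0
        rw [hw0, mul_zero, hx0] at hb0
        rcases mul_eq_zero.mp hb0.symm with h' | h'
        · exact hh0 h'
        · exact hμ (pow_eq_zero_iff (n := 2) (by norm_num) |>.mp h')
      · -- w 0 ≠ 0, normalize s = w1/w0
        set s : F := w 1 / w 0 with hs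
        have hw1 : w 1 = w 0 * s := by rw [hs]; field_simp
        have hw2 : w 2 = w 0 * s ^ 2 := by
          have : w 0 * w 2 = w 0 * (w 0 * s ^ 2) := by
            rw [hwC, hw1]; ring
          exact mul_left_cancel₀ hw0 this
        set Qs : F := h * μ ^ 2 * s ^ 2 - 2 * μ * s + 1 with hQs
        by_cases hQ0 : Qs = 0
        · -- then 1 - h is a square
          apply hns
          refine ⟨(h * μ ^ 2 * s - μ) / μ, ?_⟩
          rw [hQs] at hQ0
          field_simp
          linear_combination h * hQ0
        · -- second intersection point
          set u : Fin 3 → F := ![1, s, s ^ 2] with hu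
          have huW : u ∈ W := by
            have : u = (w 0)⁻¹ • w := by
              funext i; fin_cases i <;>
                simp [hu, hw1, hw2] <;> field_simp
            rw [this]; exact W.smul_mem _ hwW
          set α : F := μ ^ 2 * (1 - h) / Qs with hα
          set x : Fin 3 → F := α • u + ![h * μ ^ 2, μ, 1] with hxdef
          have hx0 : x 0 = α + h * μ ^ 2 := by simp [hxdef, hu]
          have hx1 : x 1 = α * s + μ := by simp [hxdef, hu]
          have hx2 : x 2 = α * s ^ 2 + 1 := by
            simp only [hxdef, Pi.add_apply, Pi.smul_apply, smul_eq_mul]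
            have h2 : (![h * μ ^ 2, μ, 1] : Fin 3 → F) 2 = 1 := by simp
            have h2' : (![(1:F), s, s ^ 2] : Fin 3 → F) 2 = s ^ 2 := by simp
            rw [hu, h2, h2']
          have hαQ : α * Qs = μ ^ 2 * (1 - h) := by
            rw [hα]; field_simp
          have hxC : x 0 * x 2 = x 1 ^ 2 := by
            rw [hx0, hx1, hx2]
            have hαQ' : α * (h * μ ^ 2 * s ^ 2 - 2 * μ * s + 1) = μ ^ 2 * (1 - h) := by
              rw [← hQs]; exact hαQ
            linear_combination hαQ'
          have hnotpar : ∀ γ : F, ¬ (![h * μ ^ 2, μ, 1] : Fin 3 → F) = γ • u := by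
            intro γ hgeq
            have e0 : h * μ ^ 2 = γ := by
              have := congrFun hgeq 0; simpa [hu] using this
            have e1 : μ = γ * s := by
              have := congrFun hgeq 1; simpa [hu] using this
            have e2 : (1 : F) = γ * s ^ 2 := by
              have := congrFun hgeq 2
              simpa [hu] using this
            have hγ : γ ≠ 0 := by
              intro h0; rw [h0] at e2; simp at e2
            apply hh1
            have hsval : s = μ / γ := by rw [e1]; field_simp
            -- γ = h μ², μ = γ s, 1 = γ s² ⟹ γ = γ² s² ⟹ γ μ² ... derive h = 1
            have e3 : γ * 1 = (γ * s) ^ 2 := by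
              rw [e2]; ring
            rw [← e1, ← e0] at e3
            have hμ2 : μ ^ 2 ≠ 0 := pow_ne_zero 2 hμ
            have : h * μ ^ 2 = 1 * μ ^ 2 := by linear_combination e3
            exact mul_right_cancel₀ hμ2 this
          have hxne : x ≠ 0 := by
            intro h0
            have : (![h * μ ^ 2, μ, 1] : Fin 3 → F) = (-α) • u := by
              have := congrFun (h0 : x = 0)
              funext i
              have hi := congrFun h0 i
              rw [hxdef] at hi
              simp only [Pi.add_apply, Pi.zero_apply, Pi.smul_apply, smul_eq_mul] at hi
              simp only [Pi.smul_apply, smul_eq_mul]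
              linear_combination hi
            exact hnotpar _ this
          have hxW : x ∈ W := W.add_mem (W.smul_mem _ huW) hPW
          have heq := huniq x hxne hxW hxC
          rw [← Projectivization.mk_rep c, Projectivization.mk_eq_mk_iff'] at heq
          obtain ⟨a, ha⟩ := heq
          -- x = a • w = (a * w 0) • u, so P-vector = (a*w0 - α) • u
          have hwu : w = (w 0) • u := by
            funext i; fin_cases i <;> simp [hu, hw1, hw2]
          have : (![h * μ ^ 2, μ, 1] : Fin 3 → F) = ((a : F) * w 0 - α) • u := by
            funext i
            have hi : a * w i = x i := congrFun ha i
            have hwi : w i = w 0 * u i := congrFun hwu i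
            rw [hxdef] at hi
            simp only [Pi.smul_apply, smul_eq_mul, Pi.add_apply] at hi
            rw [hwi] at hi
            simp only [Pi.smul_apply, smul_eq_mul]
            linear_combination -hi
          exact hnotpar _ this
end

section
/- Let q be an odd prime power with q ≡ -1 (mod 4) and q ≥ 7, and let h ∈ 1 + Q₊ (i.e., h - 1 is a nonzero square) with h a non-square. Then the number of t ∈ {1, ..., q-2} such that ω^{2t}(h-1) + ω^t(2h+2) + (h-1) is a non-square of GF(q) is at least (q-1)/2, where ω is a fixed primitive element of GF(q)*. -/
open Finset

private lemma sq_eq_sq_iff'' {F : Type*} [Field F] (w c : F) :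
    w ^ 2 = c ^ 2 ↔ w = c ∨ w = -c := by
  constructor
  · intro hw
    have h : (w - c) * (w + c) = 0 := by linear_combination hw
    rcases mul_eq_zero.1 h with h | h
    · exact Or.inl (sub_eq_zero.1 h)
    · exact Or.inr (eq_neg_of_add_eq_zero_left h)
  · rintro (rfl | rfl) <;> ring

private lemma core_count {F : Type*} [Field F] [Fintype F] [DecidableEq F] (q : ℕ)
    (hcard : Fintype.card F = q) (h2 : (2 : F) ≠ 0) (e : F) (he : e ≠ 0)
    (hne : ∀ y : F, y ^ 2 + e ^ 2 ≠ 0) :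
    2 * (univ.filter (fun y : F => ∃ w : F, w ^ 2 = y ^ 2 + e ^ 2)).card = q - 1 := by
  classical
  set T : Finset (F × F) :=
    univ.filter (fun p : F × F => p.2 ^ 2 = p.1 ^ 2 + e ^ 2) with hT
  have he2 : e ^ 2 ≠ 0 := pow_ne_zero 2 he
  -- T has cardinality q - 1
  have hT1 : T.card = q - 1 := by
    have : ((univ : Finset F).erase 0).card = T.card := by
      apply card_bij (fun u _ => (((u - e ^ 2 / u) / 2 : F), ((u + e ^ 2 / u) / 2 : F)))
      · intro u hu
        have hu0 : u ≠ 0 := by simpa using (mem_erase.1 hu).1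
        simp only [hT, mem_filter, mem_univ, true_and]
        field_simp
        ring
      · intro u1 hu1 u2 hu2 heq
        have h1 : u1 ≠ 0 := by simpa using (mem_erase.1 hu1).1
        have h2' : u2 ≠ 0 := by simpa using (mem_erase.1 hu2).1
        have e1 := congrArg Prod.fst heq
        have e2 := congrArg Prod.snd heq
        simp only at e1 e2
        have : (u1 - e ^ 2 / u1) / 2 + (u1 + e ^ 2 / u1) / 2 = u1 := by field_simp; ring
        have h' : (u2 - e ^ 2 / u2) / 2 + (u2 + e ^ 2 / u2) / 2 = u2 := by field_simp; ring
        rw [← this, ← h', e1, e2]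
      · intro p hp
        simp only [hT, mem_filter, mem_univ, true_and] at hp
        have hu0 : p.1 + p.2 ≠ 0 := by
          intro h0
          have hps : p.2 = -p.1 := by linear_combination h0
          rw [hps] at hp
          have : e ^ 2 = 0 := by linear_combination -hp
          exact he2 this
        refine ⟨p.1 + p.2, by simpa using hu0, ?_⟩
        have hd : e ^ 2 / (p.1 + p.2) = p.2 - p.1 := by
          field_simp
          linear_combination -hp
        rw [hd]
        have hfst : (p.1 + p.2 - (p.2 - p.1)) / 2 = p.1 := by field_simp; ring
        have hsnd : (p.1 + p.2 + (p.2 - p.1)) / 2 = p.2 := by field_simp; ring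
        rw [hfst, hsnd]
    rw [← this, card_erase_of_mem (mem_univ 0), card_univ, hcard]
  -- fiberwise count
  have hT2 : T.card =
      ∑ y : F, (univ.filter (fun w : F => w ^ 2 = y ^ 2 + e ^ 2)).card := by
    rw [card_eq_sum_card_fiberwise (f := Prod.fst) (t := univ) (fun p _ => mem_univ p.1)]
    refine Finset.sum_congr rfl fun y _ => ?_
    have himg : T.filter (fun p => p.1 = y) =
        (univ.filter (fun w : F => w ^ 2 = y ^ 2 + e ^ 2)).image (fun w => (y, w)) := by
      ext ⟨a, b⟩
      simp only [hT, mem_filter, mem_univ, true_and, mem_image, Prod.mk.injEq]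
      constructor
      · rintro ⟨hb, rfl⟩; exact ⟨b, hb, rfl, rfl⟩
      · rintro ⟨w, hw, rfl, rfl⟩; exact ⟨hw, rfl⟩
    rw [himg, card_image_of_injective _ (fun a b hab => (Prod.ext_iff.1 hab).2)]
  have hfib : ∀ y : F, (univ.filter (fun w : F => w ^ 2 = y ^ 2 + e ^ 2)).card =
      if (∃ w : F, w ^ 2 = y ^ 2 + e ^ 2) then 2 else 0 := by
    intro y
    split_ifs with hy
    · obtain ⟨w₀, hw₀⟩ := hy
      have hw0 : w₀ ≠ 0 := by
        intro h0
        exact hne y (by rw [← hw₀, h0]; ring)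
      have hset : univ.filter (fun w : F => w ^ 2 = y ^ 2 + e ^ 2) = {w₀, -w₀} := by
        ext w
        simp only [mem_filter, mem_univ, true_and, mem_insert, mem_singleton, ← hw₀]
        exact sq_eq_sq_iff'' w w₀
      rw [hset, card_insert_of_notMem, card_singleton]
      simp only [mem_singleton]
      intro hww
      have : (2 : F) * w₀ = 0 := by linear_combination hww
      rcases mul_eq_zero.1 this with h | h
      · exact h2 h
      · exact hw0 h
    · rw [Finset.card_eq_zero.2]
      rw [Finset.filter_eq_empty_iff]
      intro w _ hw
      exact hy ⟨w, hw⟩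
  have : T.card = 2 * (univ.filter (fun y : F => ∃ w : F, w ^ 2 = y ^ 2 + e ^ 2)).card := by
    rw [hT2]
    rw [Finset.sum_congr rfl (fun y _ => hfib y), ← Finset.sum_filter, Finset.sum_const,
      smul_eq_mul, mul_comm]
  omega

/-- For `q ≡ -1 (mod 4)`, `q ≥ 7`, `ω` a primitive element of `GF(q)*`, and `h` a
non-square with `h - 1` a nonzero square: the number of `t ∈ {1,…,q-2}` such that
`ω^{2t}(h-1) + ω^t(2h+2) + (h-1)` is a non-square is at least `(q-1)/2`. -/
theorem stmt13 (q : ℕ) (h4 : q % 4 = 3) (hq7 : 7 ≤ q)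
    (F : Type*) [Field F] [Fintype F] (hcard : Fintype.card F = q)
    (ω : F) (hω : ∀ x : F, x ≠ 0 → ∃ n : ℕ, ω ^ n = x)
    (h : F) (hh : ∃ s : F, s ≠ 0 ∧ s ^ 2 = h - 1) (hns : ¬ ∃ y : F, y ^ 2 = h) :
    (q - 1) / 2 ≤ Set.ncard {t : ℕ | 1 ≤ t ∧ t ≤ q - 2 ∧
      (ω ^ (2 * t) * (h - 1) + ω ^ t * (2 * h + 2) + (h - 1) ≠ 0 ∧
        ¬ ∃ y : F, y ^ 2 = ω ^ (2 * t) * (h - 1) + ω ^ t * (2 * h + 2) + (h - 1))} := by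
  classical
  obtain ⟨s, hs0, hs⟩ := hh
  have hchar : ringChar F ≠ 2 := by
    intro hc
    have := FiniteField.even_card_of_char_two hc
    rw [hcard] at this
    omega
  have h2 : (2 : F) ≠ 0 := Ring.two_ne_zero hchar
  have hh0 : h ≠ 0 := fun h0 => hns ⟨0, by rw [h0]; ring⟩
  have hh1 : h ≠ 1 := fun h1 => hns ⟨1, by rw [h1]; ring⟩
  have hk : h - 1 ≠ 0 := by rw [← hs]; exact pow_ne_zero 2 hs0
  have hm1 : ¬ IsSquare (-1 : F) := by
    intro hsq
    exact (FiniteField.isSquare_neg_one_iff.mp hsq) (by rw [hcard]; exact h4)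
  have hnsq : ¬ IsSquare h := by
    rintro ⟨r, hr⟩
    exact hns ⟨r, by rw [hr]; ring⟩
  have hmh : IsSquare (-h) := by
    have c1 : quadraticChar F (-1) = -1 := quadraticChar_neg_one_iff_not_isSquare.2 hm1
    have c2 : quadraticChar F h = -1 := quadraticChar_neg_one_iff_not_isSquare.2 hnsq
    have hq1 : quadraticChar F (-h) = 1 := by
      rw [show (-h : F) = -1 * h by ring, map_mul, c1, c2]; ring
    exact (quadraticChar_one_iff_isSquare (neg_ne_zero.2 hh0)).1 hq1
  obtain ⟨r, hr⟩ := hmh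
  have hr0 : r ≠ 0 := by
    intro h0
    apply neg_ne_zero.2 hh0
    rw [hr, h0, mul_zero]
  set e : F := 2 * r with he_def
  have he : e ≠ 0 := mul_ne_zero h2 hr0
  have hee : e ^ 2 = -(4 * h) := by
    rw [he_def]; linear_combination (-4 : F) * hr
  have hne : ∀ y : F, y ^ 2 + e ^ 2 ≠ 0 := by
    intro y hy
    have hy0 : y ≠ 0 := by
      intro h0
      rw [h0] at hy
      apply pow_ne_zero 2 he
      linear_combination hy
    apply hm1
    refine ⟨e / y, ?_⟩
    have : (e / y) * (e / y) = -1 := by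
      field_simp
      linear_combination hy
    exact this.symm
  have hcount := core_count q hcard h2 e he hne
  set A : Finset F := univ.filter (fun y : F => ∃ w : F, w ^ 2 = y ^ 2 + e ^ 2) with hA
  set N : Finset F := univ.filter (fun y : F => ¬ ∃ w : F, w ^ 2 = y ^ 2 + e ^ 2) with hN
  have hNcard : N.card = q - A.card := by
    rw [hN, filter_not, card_sdiff_of_subset (filter_subset _ _), card_univ, hcard, hA]
  set Y : Finset F := univ.filter
    (fun y : F => y ≠ h + 1 ∧ y ≠ 2 * h ∧ ¬ ∃ w : F, w ^ 2 = y ^ 2 + e ^ 2) with hY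
  have hYsub : N \ {2 * h} ⊆ Y := by
    intro y hy
    rw [mem_sdiff, hN, mem_filter, mem_singleton] at hy
    obtain ⟨⟨-, hy1⟩, hy2⟩ := hy
    rw [hY, mem_filter]
    refine ⟨mem_univ y, ?_, hy2, hy1⟩
    intro hyh1
    apply hy1
    refine ⟨h - 1, ?_⟩
    rw [hyh1]
    linear_combination -hee
  have hYcard : q - A.card - 1 ≤ Y.card := by
    have h1 : N.card - ({2 * h} : Finset F).card ≤ (N \ {2 * h}).card := le_card_sdiff _ _
    have h2' : (N \ {2 * h}).card ≤ Y.card := card_le_card hYsub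
    rw [card_singleton] at h1
    omega
  set X : Finset F := univ.filter (fun x : F => x ≠ 0 ∧ x ≠ 1 ∧
      ¬ ∃ z : F, z ^ 2 = x ^ 2 * (h - 1) + x * (2 * h + 2) + (h - 1)) with hX
  have hXY : Y.card ≤ X.card := by
    apply card_le_card_of_injOn (fun y => (y - (h + 1)) * (h - 1)⁻¹)
    · intro y hy
      rw [mem_coe, hY, mem_filter] at hy
      obtain ⟨-, hy1, hy2, hy3⟩ := hy
      show (y - (h + 1)) * (h - 1)⁻¹ ∈ X
      rw [hX, mem_filter]
      set x : F := (y - (h + 1)) * (h - 1)⁻¹ with hx_def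
      have hx : (h - 1) * x = y - (h + 1) := by
        rw [hx_def]; field_simp
      refine ⟨mem_univ _, ?_, ?_, ?_⟩
      · exact mul_ne_zero (sub_ne_zero.2 hy1) (inv_ne_zero hk)
      · intro h1
        apply hy2
        rw [h1, mul_one] at hx
        linear_combination -hx
      · rintro ⟨z, hz⟩
        apply hy3
        refine ⟨z * s, ?_⟩
        have key : (x ^ 2 * (h - 1) + x * (2 * h + 2) + (h - 1)) * (h - 1) = y ^ 2 + e ^ 2 := by
          linear_combination ((h - 1) * x + y + h + 1) * hx - hee
        calc (z * s) ^ 2 = z ^ 2 * s ^ 2 := by ring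
          _ = (x ^ 2 * (h - 1) + x * (2 * h + 2) + (h - 1)) * (h - 1) := by rw [hz, hs]
          _ = y ^ 2 + e ^ 2 := key
    · intro y1 _ y2 _ heq
      have h' := mul_right_cancel₀ (inv_ne_zero hk) heq
      linear_combination h'
  -- exponents
  have hω0 : ω ≠ 0 := by
    intro h0
    obtain ⟨m, hm⟩ := hω h hh0
    rw [h0] at hm
    rcases Nat.eq_zero_or_pos m with rfl | hm0
    · rw [pow_zero] at hm; exact hh1 hm.symm
    · rw [zero_pow (by omega)] at hm; exact hh0 hm.symm
  have hord : ω ^ (q - 1) = 1 := by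
    have := FiniteField.pow_card_sub_one_eq_one ω hω0
    rwa [hcard] at this
  have hexp : ∀ x : F, x ≠ 0 → x ≠ 1 → ∃ n : ℕ, (1 ≤ n ∧ n ≤ q - 2) ∧ ω ^ n = x := by
    intro x hx0 hx1
    obtain ⟨n₀, hn₀⟩ := hω x hx0
    have hpow : ω ^ (n₀ % (q - 1)) = x := by
      rw [← hn₀]
      conv_rhs => rw [← Nat.div_add_mod n₀ (q - 1)]
      rw [pow_add, pow_mul, hord, one_pow, one_mul]
    refine ⟨n₀ % (q - 1), ⟨?_, ?_⟩, hpow⟩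
    · by_contra hc
      have h0 : n₀ % (q - 1) = 0 := by omega
      rw [h0, pow_zero] at hpow
      exact hx1 hpow.symm
    · have := Nat.mod_lt n₀ (show 0 < q - 1 by omega)
      omega
  set τ : F → ℕ := fun x => if hx : x ≠ 0 ∧ x ≠ 1 then (hexp x hx.1 hx.2).choose else 0
    with hτ
  have hτ_spec : ∀ x, x ≠ 0 → x ≠ 1 → (1 ≤ τ x ∧ τ x ≤ q - 2) ∧ ω ^ (τ x) = x := by
    intro x hx0 hx1
    have hx' : x ≠ 0 ∧ x ≠ 1 := ⟨hx0, hx1⟩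
    rw [hτ]
    simp only [dif_pos hx']
    exact (hexp x hx'.1 hx'.2).choose_spec
  set Tset : Set ℕ := {t : ℕ | 1 ≤ t ∧ t ≤ q - 2 ∧
      (ω ^ (2 * t) * (h - 1) + ω ^ t * (2 * h + 2) + (h - 1) ≠ 0 ∧
        ¬ ∃ y : F, y ^ 2 = ω ^ (2 * t) * (h - 1) + ω ^ t * (2 * h + 2) + (h - 1))} with hTset
  set I : Finset ℕ := X.image τ with hI_def
  have hXmem : ∀ x ∈ X, x ≠ 0 ∧ x ≠ 1 ∧
      ¬ ∃ z : F, z ^ 2 = x ^ 2 * (h - 1) + x * (2 * h + 2) + (h - 1) := by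
    intro x hx
    rw [hX, mem_filter] at hx
    exact hx.2
  have hIcard : I.card = X.card := by
    apply Finset.card_image_of_injOn
    intro x1 h1 x2 h2' heq
    obtain ⟨hx1, hx1', -⟩ := hXmem x1 h1
    obtain ⟨hx2, hx2', -⟩ := hXmem x2 h2'
    have e1 := (hτ_spec x1 hx1 hx1').2
    have e2 := (hτ_spec x2 hx2 hx2').2
    rw [← e1, ← e2, heq]
  have hIsub : ↑I ⊆ Tset := by
    intro t ht
    rw [hI_def] at ht
    simp only [coe_image, Set.mem_image, mem_coe] at ht
    obtain ⟨x, hxX, rfl⟩ := ht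
    obtain ⟨hx0, hx1, hxns⟩ := hXmem x hxX
    obtain ⟨⟨ht1, ht2⟩, htx⟩ := hτ_spec x hx0 hx1
    have hval : ω ^ (2 * τ x) * (h - 1) + ω ^ (τ x) * (2 * h + 2) + (h - 1)
        = x ^ 2 * (h - 1) + x * (2 * h + 2) + (h - 1) := by
      rw [mul_comm 2 (τ x), pow_mul, htx]
    rw [hTset]
    refine ⟨ht1, ht2, ?_, ?_⟩
    · rw [hval]
      intro h0
      exact hxns ⟨0, by rw [h0]; ring⟩
    · rw [hval]
      exact hxns
  have hfin : Tset.Finite := by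
    apply Set.Finite.subset (Set.finite_Iic (q - 2))
    intro t ht
    exact ht.2.1
  have hle := Set.ncard_le_ncard hIsub hfin
  rw [Set.ncard_coe_finset] at hle
  have : (q - 1) / 2 ≤ X.card := by omega
  calc (q - 1) / 2 ≤ X.card := this
    _ = I.card := hIcard.symm
    _ ≤ Tset.ncard := hle
end
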